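/- Let Γ be a linearly ordered abelian group and p a prime with Γ ≠ pΓ. Assume that for every convex subgroup Δ of Γ for which Γ/Δ is p-regular (i.e. Γ/Δ' is p-divisible for every convex subgroup Δ' with Δ ⊊ Δ'), the quotient Γ/Δ is in fact p-divisible. Let Δ₀ be the intersection of all convex subgroups Δ of Γ with Γ/Δ p-divisible. Then for every γ ∈ Γ: γ ∈ Δ₀ if and only if there exists ε ∈ Γ such that for all α ∈ Γ with |α| < |γ| one has ε − α ∉ pΓ. (Here |γ| = max{γ, −γ}.) -/

import Mathlib

/-- A subgroup `Δ` of a linearly ordered abelian group `Γ` is convex if whenever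
`0 ≤ β ≤ δ` and `δ ∈ Δ`, then `β ∈ Δ`. -/
def IsConvexAddSubgroup {Γ : Type*} [AddCommGroup Γ] [LinearOrder Γ] [IsOrderedAddMonoid Γ] (Δ : AddSubgroup Γ) : Prop :=
  ∀ β δ : Γ, 0 ≤ β → β ≤ δ → δ ∈ Δ → β ∈ Δ

/-- The quotient `Γ/Δ` of `Γ` by the (convex) subgroup `Δ` is `p`-divisible:
for every `γ ∈ Γ` there are `ε ∈ Γ` and `δ ∈ Δ` with `γ = p • ε + δ`. -/
def QuotPDivisible {Γ : Type*} [AddCommGroup Γ] [LinearOrder Γ] [IsOrderedAddMonoid Γ] (p : ℕ) (Δ : AddSubgroup Γ) :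
    Prop :=
  ∀ γ : Γ, ∃ ε : Γ, ∃ δ ∈ Δ, γ = p • ε + δ

/-- The quotient `Γ/Δ` has rank `1`: `Δ ≠ Γ` and there is no convex subgroup strictly
between `Δ` and `Γ`. -/
def QuotRankOne {Γ : Type*} [AddCommGroup Γ] [LinearOrder Γ] [IsOrderedAddMonoid Γ] (Δ : AddSubgroup Γ) : Prop :=
  Δ ≠ ⊤ ∧ ∀ Δ' : AddSubgroup Γ, IsConvexAddSubgroup Δ' → Δ < Δ' → Δ' = ⊤

/-- A linearly ordered abelian group `Γ` is `p`-antiregular if `Γ/Δ` is not `p`-divisible for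
every convex subgroup `Δ ≠ Γ`, and no quotient of `Γ` by a convex subgroup has rank `1`. -/
def IsPAntiregular (p : ℕ) (Γ : Type*) [AddCommGroup Γ] [LinearOrder Γ] [IsOrderedAddMonoid Γ] : Prop :=
  (∀ Δ : AddSubgroup Γ, IsConvexAddSubgroup Δ → Δ ≠ ⊤ → ¬ QuotPDivisible p Δ) ∧
  (∀ Δ : AddSubgroup Γ, IsConvexAddSubgroup Δ → ¬ QuotRankOne Δ)

/-- A convex subgroup contains the absolute value of each of its elements. -/
lemma abs_mem_of_mem {Γ : Type*} [AddCommGroup Γ] [LinearOrder Γ] [IsOrderedAddMonoid Γ] {Δ : AddSubgroup Γ} {x : Γ}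
    (hx : x ∈ Δ) : |x| ∈ Δ := by
  rcases abs_choice x with h | h
  · rw [h]; exact hx
  · rw [h]; exact neg_mem hx

/-- A member whose absolute value is in the subgroup is in the subgroup. -/
lemma mem_of_abs_mem {Γ : Type*} [AddCommGroup Γ] [LinearOrder Γ] [IsOrderedAddMonoid Γ] {Δ : AddSubgroup Γ} {x : Γ}
    (hx : |x| ∈ Δ) : x ∈ Δ := by
  rcases abs_choice x with h | h
  · rwa [h] at hx
  · rw [h] at hx; simpa using neg_mem hx

/-- Lemma: `∅`-definability of `Δ₀`.
Let `Γ` be a linearly ordered abelian group and `p` a prime with `Γ ≠ pΓ`. Assume every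
convex subgroup `Δ` of `Γ` with `Γ/Δ` `p`-regular (i.e. `Γ/Δ'` is `p`-divisible for every
convex `Δ'` with `Δ ⊊ Δ'`) has `Γ/Δ` `p`-divisible. Let `Δ₀` be the intersection of all
convex subgroups `Δ` with `Γ/Δ` `p`-divisible. Then for every `γ ∈ Γ`: `γ ∈ Δ₀` iff there
exists `ε ∈ Γ` such that for all `α` with `|α| < |γ|` one has `ε - α ∉ pΓ`. -/
theorem mem_inter_pDivisible_iff (p : ℕ) (hp : p.Prime)
    (Γ : Type*) [AddCommGroup Γ] [LinearOrder Γ] [IsOrderedAddMonoid Γ]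
    (hnd : ∃ γ : Γ, ∀ y : Γ, γ ≠ p • y)
    (hreg : ∀ Δ : AddSubgroup Γ, IsConvexAddSubgroup Δ →
      (∀ Δ' : AddSubgroup Γ, IsConvexAddSubgroup Δ' → Δ < Δ' → QuotPDivisible p Δ') →
      QuotPDivisible p Δ) :
    ∀ γ : Γ,
      (∀ Δ : AddSubgroup Γ, IsConvexAddSubgroup Δ → QuotPDivisible p Δ → γ ∈ Δ) ↔
      ∃ ε : Γ, ∀ α : Γ, |α| < |γ| → ∀ y : Γ, ε - α ≠ p • y := by
  intro γ
  constructor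
  · intro hγ
    by_cases hγ0 : γ = 0
    · refine ⟨0, fun α hα y hy => ?_⟩
      rw [hγ0, abs_zero] at hα
      exact absurd hα (abs_nonneg α).not_gt
    -- the largest convex subgroup not containing γ
    have hγpos : (0 : Γ) < |γ| := abs_pos.mpr hγ0
    set Δm : AddSubgroup Γ :=
      { carrier := {x | ∀ n : ℕ, n • |x| < |γ|}
        zero_mem' := by
          intro n
          simpa using hγpos
        add_mem' := by
          intro a b ha hb n
          rcases le_total |a| |b| with h | h
          · calc n • |a + b| ≤ n • (|a| + |b|) := nsmul_le_nsmul_right (abs_add_le a b) n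
              _ ≤ n • (|b| + |b|) := nsmul_le_nsmul_right (add_le_add_left h _) n
              _ = (n * 2) • |b| := by rw [← two_nsmul, ← mul_nsmul']
              _ < |γ| := hb _
          · calc n • |a + b| ≤ n • (|a| + |b|) := nsmul_le_nsmul_right (abs_add_le a b) n
              _ ≤ n • (|a| + |a|) := nsmul_le_nsmul_right (add_le_add_right h _) n
              _ = (n * 2) • |a| := by rw [← two_nsmul, ← mul_nsmul']
              _ < |γ| := ha _
        neg_mem' := by
          intro a ha n
          simpa using ha n } with hΔm
    have hconv : IsConvexAddSubgroup Δm := by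
      intro β δ hβ0 hβδ hδ n
      have h1 : |β| = β := abs_of_nonneg hβ0
      have h2 : |δ| = δ := abs_of_nonneg (hβ0.trans hβδ)
      calc n • |β| ≤ n • |δ| := by
            rw [h1, h2]; exact nsmul_le_nsmul_right hβδ n
        _ < |γ| := hδ n
    have hγnot : γ ∉ Δm := fun h => absurd (h 1) (by simp)
    have hnotdiv : ¬ QuotPDivisible p Δm := fun hdiv => hγnot (hγ Δm hconv hdiv)
    -- by hreg, some strictly larger convex subgroup has non p-divisible quotient
    have hup : ¬ ∀ Δ' : AddSubgroup Γ, IsConvexAddSubgroup Δ' → Δm < Δ' →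
        QuotPDivisible p Δ' := fun h => hnotdiv (hreg Δm hconv h)
    push_neg at hup
    obtain ⟨Δ', hconv', hlt, hnd'⟩ := hup
    -- Δ' contains |γ|
    obtain ⟨x, hxΔ', hxΔm⟩ := SetLike.exists_of_lt hlt
    have hγΔ' : |γ| ∈ Δ' := by
      change ¬ ∀ n : ℕ, n • |x| < |γ| at hxΔm
      simp only [hΔm, AddSubgroup.mem_mk, Set.mem_setOf_eq, not_forall, not_lt] at hxΔm
      obtain ⟨n, hn⟩ := hxΔm
      have : n • |x| ∈ Δ' := AddSubgroup.nsmul_mem Δ' (abs_mem_of_mem hxΔ') n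
      exact hconv' _ _ (abs_nonneg γ) hn this
    -- extract the witness
    rw [QuotPDivisible] at hnd'
    push_neg at hnd'
    obtain ⟨ε, hε⟩ := hnd'
    refine ⟨ε, fun α hα y hy => ?_⟩
    have hαΔ' : α ∈ Δ' :=
      mem_of_abs_mem (hconv' _ _ (abs_nonneg α) hα.le hγΔ')
    exact hε y α hαΔ' (by rw [← hy]; abel)
  · intro ⟨ε, hε⟩ Δ hconv hdiv
    by_contra hγΔ
    obtain ⟨η, δ, hδΔ, hεeq⟩ := hdiv ε
    have hδγ : |δ| < |γ| := by
      by_contra h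
      push_neg at h
      exact hγΔ (mem_of_abs_mem (hconv _ _ (abs_nonneg γ) h (abs_mem_of_mem hδΔ)))
    exact hε δ hδγ η (by rw [hεeq]; abel)
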